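/- With g_{j,k} defined as above, the set of pairs {(x, x ⊕ e_j) : x ∈ S_k, x_j = 0} is a set of 2^{m'−1} disjoint comparable pairs each violated by g_{j,k}; hence g_{j,k} is 2^{m'−1}/2^m-far from monotone, i.e., at least 2^{m'−1} values must change to make g_{j,k} monotone. -/

import Mathlib

def val {m : ℕ} (x : Fin m → Bool) : ℕ := ∑ i, if x i then 2 ^ (i : ℕ) else 0

/-- The block `S_k` (for `k = 1, …, 2^(m-m′)`): points `x` with
`val x ∈ [(k−1)·2^m′, k·2^m′)`. -/
def Sblock {m : ℕ} (m' k : ℕ) : Finset (Fin m → Bool) :=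
  Finset.univ.filter fun x => (k - 1) * 2 ^ m' ≤ val x ∧ val x < k * 2 ^ m'

/-- `g_{j,k} x = 2·val x − 2·2^j − 1` if `x j = 1` and `x ∈ S_k`, else `2·val x`
(0-indexed coordinate `j` has bit weight `2^j`, so twice the weight is `2^(j+1)`). -/
def gjk {m : ℕ} (m' : ℕ) (j : Fin m) (k : ℕ) (x : Fin m → Bool) : ℤ :=
  if x j = true ∧ x ∈ Sblock (m := m) m' k
  then 2 * (val x : ℤ) - 2 ^ ((j : ℕ) + 1) - 1 else 2 * (val x : ℤ)

namespace Stmt13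

variable {m : ℕ}

lemma val_eq_equiv (x : Fin m → Bool) :
    val x = (finFunctionFinEquiv (fun i => finTwoEquiv.symm (x i)) : ℕ) := by
  rw [finFunctionFinEquiv_apply]
  simp only [val]
  refine Finset.sum_congr rfl fun i _ => ?_
  cases h : x i <;> simp [finTwoEquiv, h]

lemma val_injective : Function.Injective (val (m := m)) := by
  intro x y hxy
  rw [val_eq_equiv, val_eq_equiv] at hxy
  have h2 := finFunctionFinEquiv.injective (Fin.val_injective hxy)
  funext i
  exact finTwoEquiv.symm.injective (congrFun h2 i)

lemma val_lt (x : Fin m → Bool) : val x < 2 ^ m := by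
  rw [val_eq_equiv]
  have := (finFunctionFinEquiv (fun i => finTwoEquiv.symm (x i))).isLt
  simpa using this

lemma val_surj {n : ℕ} (hn : n < 2 ^ m) : ∃ x : Fin m → Bool, val x = n := by
  refine ⟨fun i => finTwoEquiv ((finFunctionFinEquiv.symm ⟨n, by simpa using hn⟩) i), ?_⟩
  rw [val_eq_equiv]
  have : (fun i => finTwoEquiv.symm
      (finTwoEquiv ((finFunctionFinEquiv.symm ⟨n, by simpa using hn⟩) i)))
      = finFunctionFinEquiv.symm ⟨n, by simpa using hn⟩ := by
    funext i; simp
  rw [this, Equiv.apply_symm_apply]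

/-- low part of `val x` below coordinate `j`. -/
def lov (j : Fin m) (x : Fin m → Bool) : ℕ :=
  ∑ i ∈ Finset.univ.filter fun i : Fin m => (i : ℕ) < (j : ℕ),
    if x i then 2 ^ (i : ℕ) else 0

/-- high part of `val x` above coordinate `j`. -/
def hiv (j : Fin m) (x : Fin m → Bool) : ℕ :=
  ∑ i ∈ Finset.univ.filter fun i : Fin m => (j : ℕ) < (i : ℕ),
    if x i then 2 ^ (i : ℕ) else 0

lemma val_split (j : Fin m) (x : Fin m → Bool) :
    val x = lov j x + ((if x j then 2 ^ (j : ℕ) else 0) + hiv j x) := by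
  classical
  simp only [val]
  rw [← Finset.sum_filter_add_sum_filter_not Finset.univ
    (fun i : Fin m => (i : ℕ) < (j : ℕ))]
  congr 1
  have h : Finset.univ.filter (fun i : Fin m => ¬ (i : ℕ) < (j : ℕ))
      = insert j (Finset.univ.filter fun i : Fin m => (j : ℕ) < (i : ℕ)) := by
    ext i
    simp only [Finset.mem_filter, Finset.mem_univ, true_and, Finset.mem_insert, Fin.ext_iff]
    omega
  rw [h, Finset.sum_insert (by simp)]
  simp only [hiv]

lemma sum_range_two_pow_lt (t : ℕ) : ∑ n ∈ Finset.range t, 2 ^ n < 2 ^ t := by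
  induction t with
  | zero => simp
  | succ t ih =>
    rw [Finset.sum_range_succ, pow_succ]
    omega

lemma lov_lt (j : Fin m) (x : Fin m → Bool) : lov j x < 2 ^ (j : ℕ) := by
  have h1 : lov j x ≤ ∑ i ∈ Finset.univ.filter
      (fun i : Fin m => (i : ℕ) < (j : ℕ)), 2 ^ (i : ℕ) :=
    Finset.sum_le_sum fun i _ => by split <;> simp
  have h2 : ∑ i ∈ Finset.univ.filter (fun i : Fin m => (i : ℕ) < (j : ℕ)), 2 ^ (i : ℕ)
      = ∑ n ∈ Finset.range (j : ℕ), 2 ^ n := by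
    rw [Finset.sum_filter,
      Fin.sum_univ_eq_sum_range (fun n => if n < (j : ℕ) then 2 ^ n else 0) m,
      ← Finset.sum_filter]
    congr 1
    ext n
    simp only [Finset.mem_filter, Finset.mem_range]
    have := j.isLt
    omega
  calc lov j x ≤ ∑ n ∈ Finset.range (j : ℕ), 2 ^ n := h2 ▸ h1
    _ < 2 ^ (j : ℕ) := sum_range_two_pow_lt _

lemma hiv_dvd (j : Fin m) (x : Fin m → Bool) : 2 ^ ((j : ℕ) + 1) ∣ hiv j x := by
  refine Finset.dvd_sum fun i hi => ?_
  simp only [Finset.mem_filter, Finset.mem_univ, true_and] at hi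
  split
  · exact pow_dvd_pow 2 (by omega)
  · exact dvd_zero _

lemma lov_update (j : Fin m) (x : Fin m → Bool) (b : Bool) :
    lov j (Function.update x j b) = lov j x := by
  refine Finset.sum_congr rfl fun i hi => ?_
  simp only [Finset.mem_filter, Finset.mem_univ, true_and] at hi
  rw [Function.update_of_ne (Fin.ne_of_val_ne (by omega))]

lemma hiv_update (j : Fin m) (x : Fin m → Bool) (b : Bool) :
    hiv j (Function.update x j b) = hiv j x := by
  refine Finset.sum_congr rfl fun i hi => ?_
  simp only [Finset.mem_filter, Finset.mem_univ, true_and] at hi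
  rw [Function.update_of_ne (Fin.ne_of_val_ne (by omega))]

lemma val_update (j : Fin m) (x : Fin m → Bool) (hx : x j = false) :
    val (Function.update x j true) = val x + 2 ^ (j : ℕ) := by
  have h1 := val_split j x
  have h2 := val_split j (Function.update x j true)
  rw [lov_update, hiv_update, Function.update_self] at h2
  rw [hx] at h1
  simp only [Bool.false_eq_true, if_false, if_true] at h1 h2
  omega

lemma keyA {p l hh N : ℕ} (hl : l < p) (hhh : 2 * p ∣ hh) (hN : 2 * p ∣ N)
    (h : l + hh < N) : l + hh + p < N := by
  obtain ⟨a, rfl⟩ := hhh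
  obtain ⟨b, rfl⟩ := hN
  have hp : 0 < p := by omega
  have hab : a < b := by
    have : 2 * p * a < 2 * p * b := by omega
    exact lt_of_mul_lt_mul_left this (by omega)
  have : 2 * p * (a + 1) ≤ 2 * p * b := Nat.mul_le_mul_left _ (by omega)
  have h2 : 2 * p * (a + 1) = 2 * p * a + 2 * p := by ring
  omega

lemma keyB {p l hh M : ℕ} (hl : l < p) (hhh : 2 * p ∣ hh) (hM : 2 * p ∣ M)
    (h : M ≤ l + hh + p) : M ≤ l + hh := by
  obtain ⟨a, rfl⟩ := hhh
  obtain ⟨b, rfl⟩ := hM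
  have hp : 0 < p := by omega
  have hba : b ≤ a := by
    by_contra hba
    have : a + 1 ≤ b := by omega
    have : 2 * p * (a + 1) ≤ 2 * p * b := Nat.mul_le_mul_left _ this
    have h2 : 2 * p * (a + 1) = 2 * p * a + 2 * p := by ring
    omega
  have : 2 * p * b ≤ 2 * p * a := Nat.mul_le_mul_left _ hba
  omega

lemma mem_Sblock_iff {m' k : ℕ} {x : Fin m → Bool} :
    x ∈ Sblock (m := m) m' k ↔ (k - 1) * 2 ^ m' ≤ val x ∧ val x < k * 2 ^ m' := by
  simp [Sblock]

lemma two_pow_succ_dvd {m' : ℕ} (j : Fin m) (hj : (j : ℕ) < m') (c : ℕ) :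
    2 * 2 ^ (j : ℕ) ∣ c * 2 ^ m' := by
  have : (2 : ℕ) * 2 ^ (j : ℕ) = 2 ^ ((j : ℕ) + 1) := by rw [pow_succ]; ring
  rw [this]
  exact Dvd.dvd.mul_left (pow_dvd_pow 2 (by omega)) c

lemma up_mem {m' k : ℕ} (j : Fin m) (hj : (j : ℕ) < m') {x : Fin m → Bool}
    (hx : x ∈ Sblock (m := m) m' k) (hxj : x j = false) :
    Function.update x j true ∈ Sblock (m := m) m' k := by
  rw [mem_Sblock_iff] at hx ⊢
  rw [val_update j x hxj]
  refine ⟨le_trans hx.1 (Nat.le_add_right _ _), ?_⟩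
  have hsplit := val_split j x
  rw [hxj] at hsplit
  simp only [Bool.false_eq_true, if_false] at hsplit
  have h2 : 2 ^ ((j : ℕ) + 1) = 2 * 2 ^ (j : ℕ) := by rw [pow_succ]; ring
  have hd : 2 * 2 ^ (j : ℕ) ∣ hiv j x := h2 ▸ hiv_dvd j x
  have := keyA (lov_lt j x) hd (two_pow_succ_dvd j hj k) (by omega)
  omega

lemma down_mem {m' k : ℕ} (j : Fin m) (hj : (j : ℕ) < m') {y : Fin m → Bool}
    (hy : y ∈ Sblock (m := m) m' k) (hyj : y j = true) :
    Function.update y j false ∈ Sblock (m := m) m' k := by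
  set x := Function.update y j false with hxdef
  have hxj : x j = false := Function.update_self _ _ _
  have hxy : Function.update x j true = y := by
    rw [hxdef, Function.update_idem]
    exact hyj ▸ Function.update_eq_self j y
  have hval : val y = val x + 2 ^ (j : ℕ) := by
    rw [← hxy, val_update j x hxj]
  rw [mem_Sblock_iff] at hy ⊢
  refine ⟨?_, lt_of_le_of_lt (Nat.le.intro hval.symm) hy.2⟩
  have hsplit := val_split j x
  rw [hxj] at hsplit
  simp only [Bool.false_eq_true, if_false] at hsplit
  have h2 : 2 ^ ((j : ℕ) + 1) = 2 * 2 ^ (j : ℕ) := by rw [pow_succ]; ring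
  have hd : 2 * 2 ^ (j : ℕ) ∣ hiv j x := h2 ▸ hiv_dvd j x
  have harg : (k - 1) * 2 ^ m' ≤ lov j x + hiv j x + 2 ^ (j : ℕ) := by
    have hv : lov j x + hiv j x + 2 ^ (j : ℕ) = val y := by rw [hval, hsplit]; ring
    rw [hv]; exact hy.1
  have := keyB (lov_lt j x) hd (two_pow_succ_dvd j hj (k - 1)) harg
  calc (k - 1) * 2 ^ m' ≤ lov j x + hiv j x := this
    _ = val x := by rw [hsplit]; ring


lemma card_Sblock {m' k : ℕ} (hm : m' ≤ m) (hk1 : 1 ≤ k) (hk2 : k ≤ 2 ^ (m - m')) :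
    (Sblock (m := m) m' k).card = 2 ^ m' := by
  have hN : k * 2 ^ m' ≤ 2 ^ m := by
    calc k * 2 ^ m' ≤ 2 ^ (m - m') * 2 ^ m' := Nat.mul_le_mul_right _ hk2
      _ = 2 ^ m := by rw [← pow_add]; congr 1; omega
  have hcard : (Sblock (m := m) m' k).card
      = (Finset.Ico ((k - 1) * 2 ^ m') (k * 2 ^ m')).card := by
    refine Finset.card_bij (fun x _ => val x) ?_ ?_ ?_
    · intro x hx
      rw [mem_Sblock_iff] at hx
      simp [Finset.mem_Ico, hx.1, hx.2]
    · intro x hx y hy hxy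
      exact val_injective hxy
    · intro n hn
      simp only [Finset.mem_Ico] at hn
      obtain ⟨x, hx⟩ := val_surj (lt_of_lt_of_le hn.2 hN)
      exact ⟨x, mem_Sblock_iff.mpr (by omega), hx⟩
  have hico : (Finset.Ico ((k - 1) * 2 ^ m') (k * 2 ^ m')).card
      = k * 2 ^ m' - (k - 1) * 2 ^ m' := Nat.card_Ico _ _
  have hle : (k - 1) * 2 ^ m' + 2 ^ m' = k * 2 ^ m' := by
    obtain ⟨k', rfl⟩ : ∃ k', k = k' + 1 := ⟨k - 1, by omega⟩
    simp [add_mul]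
  rw [hcard, hico, ← hle]
  exact Nat.add_sub_cancel_left _ _

lemma card_false {m' k : ℕ} (j : Fin m) (hm : m' ≤ m) (hj : (j : ℕ) < m')
    (hk1 : 1 ≤ k) (hk2 : k ≤ 2 ^ (m - m')) :
    ((Sblock (m := m) m' k).filter fun x => x j = false).card = 2 ^ (m' - 1) := by
  classical
  set S := Sblock (m := m) m' k with hS
  have hun : S.filter (fun x => x j = false) ∪ S.filter (fun x => x j = true) = S := by
    ext x
    simp only [Finset.mem_union, Finset.mem_filter]
    cases h : x j <;> tauto
  have hdis : Disjoint (S.filter fun x => x j = false) (S.filter fun x => x j = true) := by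
    rw [Finset.disjoint_left]
    intro a ha hb
    simp only [Finset.mem_filter] at ha hb
    rw [ha.2] at hb
    exact Bool.false_ne_true hb.2
  have hsum : (S.filter fun x => x j = false).card + (S.filter fun x => x j = true).card
      = S.card := by
    rw [← Finset.card_union_of_disjoint hdis, hun]
  have heq : (S.filter fun x => x j = false).card = (S.filter fun x => x j = true).card := by
    refine Finset.card_nbij' (fun x => Function.update x j true)
      (fun y => Function.update y j false) ?_ ?_ ?_ ?_
    · intro x hx
      simp only [Finset.mem_coe, Finset.mem_filter] at hx ⊢
      exact ⟨up_mem j hj hx.1 hx.2, Function.update_self _ _ _⟩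
    · intro y hy
      simp only [Finset.mem_coe, Finset.mem_filter] at hy ⊢
      exact ⟨down_mem j hj hy.1 hy.2, Function.update_self _ _ _⟩
    · intro x hx
      simp only [Finset.mem_coe, Finset.mem_filter] at hx
      show Function.update (Function.update x j true) j false = x
      rw [Function.update_idem]
      exact hx.2 ▸ Function.update_eq_self j x
    · intro y hy
      simp only [Finset.mem_coe, Finset.mem_filter] at hy
      show Function.update (Function.update y j false) j true = y
      rw [Function.update_idem]
      exact hy.2 ▸ Function.update_eq_self j y
  have hSb : S.card = 2 ^ m' := card_Sblock hm hk1 hk2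
  have hpow : (2 : ℕ) ^ m' = 2 ^ (m' - 1) * 2 := by
    obtain ⟨t, ht⟩ : ∃ t, m' = t + 1 := ⟨m' - 1, by clear hsum heq hSb; omega⟩
    rw [ht, Nat.add_sub_cancel, pow_succ]
  have h2 : (S.filter fun x => x j = false).card * 2 = 2 ^ (m' - 1) * 2 := by
    rw [mul_two, ← hpow, ← hSb, ← hsum, heq]
  exact Nat.eq_of_mul_eq_mul_right (by norm_num) h2

lemma pair_facts {m' k : ℕ} (j : Fin m) (hj : (j : ℕ) < m')
    {x : Fin m → Bool} (hx : x ∈ Sblock (m := m) m' k) (hxj : x j = false) :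
    Function.update x j true ∈ Sblock (m := m) m' k ∧
    x < Function.update x j true ∧
    gjk m' j k (Function.update x j true) < gjk m' j k x := by
  have hmem := up_mem j hj hx hxj
  refine ⟨hmem, ?_, ?_⟩
  · constructor
    · intro i
      by_cases hi : i = j
      · subst hi
        rw [hxj, Function.update_self]
        exact Bool.false_le _
      · rw [Function.update_of_ne hi]
    · intro hle
      have := hle j
      rw [Function.update_self, hxj] at this
      exact absurd this (by simp)
  · have hg1 : gjk m' j k x = 2 * (val x : ℤ) := by
      rw [gjk, if_neg]
      rintro ⟨h1, -⟩
      rw [hxj] at h1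
      exact Bool.false_ne_true h1
    have hg2 : gjk m' j k (Function.update x j true)
        = 2 * (val (Function.update x j true) : ℤ) - 2 ^ ((j : ℕ) + 1) - 1 := by
      rw [gjk, if_pos ⟨Function.update_self _ _ _, hmem⟩]
    rw [hg1, hg2, val_update j x hxj]
    push_cast
    have : (2 : ℤ) ^ ((j : ℕ) + 1) = 2 * 2 ^ (j : ℕ) := by rw [pow_succ]; ring
    rw [this]
    linarith

end Stmt13

/-- The pairs `(x, x ⊕ e_j)` with `x ∈ S_k`, `x j = 0` form `2^(m′−1)` disjoint
comparable pairs each violated by `g_{j,k}`; hence `g_{j,k}` is `2^(m′−1)/2^m`-far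
from monotone: every monotone function differs from it on at least `2^(m′−1)` points. -/
theorem stmt13 {m : ℕ} (m' : ℕ) (j : Fin m) (k : ℕ) (hm : m' ≤ m) (hj : (j : ℕ) < m')
    (hk1 : 1 ≤ k) (hk2 : k ≤ 2 ^ (m - m')) :
    ((Sblock (m := m) m' k).filter fun x => x j = false).card = 2 ^ (m' - 1) ∧
    (∀ x ∈ Sblock (m := m) m' k, x j = false →
      Function.update x j true ∈ Sblock (m := m) m' k ∧
      x < Function.update x j true ∧
      gjk m' j k (Function.update x j true) < gjk m' j k x) ∧
    ∀ h : (Fin m → Bool) → ℤ, Monotone h →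
      2 ^ (m' - 1) ≤ (Finset.univ.filter fun x => gjk m' j k x ≠ h x).card := by
  classical
  refine ⟨Stmt13.card_false j hm hj hk1 hk2,
    fun x hx hxj => Stmt13.pair_facts j hj hx hxj, ?_⟩
  intro h hmono
  rw [← Stmt13.card_false (m := m) j hm hj hk1 hk2]
  set P := (Sblock (m := m) m' k).filter fun x => x j = false with hP
  set D := Finset.univ.filter fun x => gjk m' j k x ≠ h x with hD
  have hjP : ∀ x ∈ P, x j = false := fun x hx => (Finset.mem_filter.mp hx).2
  have hSP : ∀ x ∈ P, x ∈ Sblock (m := m) m' k := fun x hx => (Finset.mem_filter.mp hx).1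
  refine Finset.card_le_card_of_injOn
    (fun x => if gjk m' j k x = h x then Function.update x j true else x) ?_ ?_
  · intro x hx
    obtain ⟨hmem, hlt, hgg⟩ := Stmt13.pair_facts j hj (hSP x hx) (hjP x hx)
    show (if gjk m' j k x = h x then Function.update x j true else x) ∈ D
    by_cases hcase : gjk m' j k x = h x
    · rw [if_pos hcase]
      simp only [hD, Finset.mem_filter, Finset.mem_univ, true_and]
      intro hbad
      have hle : h x ≤ h (Function.update x j true) := hmono (le_of_lt hlt)
      rw [← hcase, ← hbad] at hle
      exact absurd hle (not_le.mpr hgg)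
    · rw [if_neg hcase]
      simp only [hD, Finset.mem_filter, Finset.mem_univ, true_and]
      exact hcase
  · intro x hx y hy hxy
    replace hxy : (if gjk m' j k x = h x then Function.update x j true else x)
        = (if gjk m' j k y = h y then Function.update y j true else y) := hxy
    have hxj := hjP x hx
    have hyj := hjP y hy
    by_cases h1 : gjk m' j k x = h x <;> by_cases h2 : gjk m' j k y = h y
    · rw [if_pos h1, if_pos h2] at hxy
      funext i
      by_cases hi : i = j
      · subst hi; rw [hxj, hyj]
      · have := congrFun hxy i
        rwa [Function.update_of_ne hi, Function.update_of_ne hi] at this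
    · rw [if_pos h1, if_neg h2] at hxy
      exfalso
      have := congrFun hxy j
      rw [Function.update_self, hyj] at this
      simp at this
    · rw [if_neg h1, if_pos h2] at hxy
      exfalso
      have := congrFun hxy j
      rw [Function.update_self, hxj] at this
      simp at this
    · rwa [if_neg h1, if_neg h2] at hxy
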